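/- For a linear L-layer network with overall gradient matrix G = [G^L_L, ..., G^L_1] where G^L_k = (∏_{i=L}^{k+1} W_i)ᵀ ⊗ Z_{k−1}, the rank satisfies max_k rank(Z_{k−1}) ≤ rank(G) ≤ D · Σ_{k=1}^L rank(Z_{k−1}), provided each weight product ∏_{i=L}^{k+1} W_i is nonzero for the lower bound (e.g., invertible). -/

import Mathlib

open Matrix Kronecker

section Aux

theorem aux_rank_add_le {m n : Type*} [Fintype m] [Fintype n]
    (A B : Matrix m n ℝ) : (A + B).rank ≤ A.rank + B.rank := by
  classical
  rw [Matrix.rank, Matrix.rank, Matrix.rank, Matrix.mulVecLin_add]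
  have h : LinearMap.range (A.mulVecLin + B.mulVecLin) ≤
      LinearMap.range A.mulVecLin ⊔ LinearMap.range B.mulVecLin := by
    rintro x ⟨v, rfl⟩
    exact Submodule.add_mem_sup (LinearMap.mem_range_self _ v) (LinearMap.mem_range_self _ v)
  exact (Submodule.finrank_mono h).trans
    (Submodule.finrank_add_le_finrank_add_finrank _ _)

theorem aux_rank_sum_le {m n ι : Type*} [Fintype m] [Fintype n] (s : Finset ι)
    (A : ι → Matrix m n ℝ) : (∑ i ∈ s, A i).rank ≤ ∑ i ∈ s, (A i).rank := by
  classical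
  induction s using Finset.induction with
  | empty => simp
  | insert _ _ h ih =>
    rw [Finset.sum_insert h, Finset.sum_insert h]
    exact (aux_rank_add_le _ _).trans (add_le_add_right ih _)

theorem aux_rank_submatrix_le {m n m' n' : Type*} [Fintype m] [Fintype n]
    [Fintype m'] [Fintype n'] [DecidableEq m] [DecidableEq n]
    (A : Matrix m n ℝ) (r : m' → m) (c : n' → n) :
    (A.submatrix r c).rank ≤ A.rank := by
  have h1 : (1 : Matrix m m ℝ).submatrix r _root_.id * A.submatrix _root_.id c
      = A.submatrix r c := by
    have := Matrix.submatrix_mul_equiv (1 : Matrix m m ℝ) A r (Equiv.refl m) c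
    simpa using this
  have h2 : A.submatrix _root_.id c
      = A * (1 : Matrix n n ℝ).submatrix _root_.id c := by
    have := Matrix.submatrix_mul_equiv A (1 : Matrix n n ℝ) _root_.id (Equiv.refl n) c
    simpa using this.symm
  calc (A.submatrix r c).rank
      = ((1 : Matrix m m ℝ).submatrix r _root_.id
          * (A * (1 : Matrix n n ℝ).submatrix _root_.id c)).rank := by
        rw [h1.symm, h2]
    _ ≤ (A * (1 : Matrix n n ℝ).submatrix _root_.id c).rank := Matrix.rank_mul_le_right _ _
    _ ≤ A.rank := Matrix.rank_mul_le_left _ _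

end Aux

/-- For a linear `L`-layer network with invertible weights, gradient blocks
`G^L_k = (∏_{i=L}^{k+1} W_i)ᵀ ⊗ Z_{k-1}` and `G` their horizontal concatenation,
the rank satisfies `max_k rank Z_{k-1} ≤ rank G ≤ D * ∑_{k=1}^L rank Z_{k-1}`. -/
theorem rank_bounds_linear_network_gradient (N D L : ℕ)
    (W : ℕ → Matrix (Fin D) (Fin D) ℝ) (hW : ∀ i : ℕ, IsUnit (W i))
    (Z : ℕ → Matrix (Fin N) (Fin D) ℝ)
    (hZ : ∀ i : ℕ, Z (i + 1) = Z i * W (i + 1))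
    -- `S k = W_L * W_{L-1} * ⋯ * W_{k+1}` is the (descending) suffix weight product
    (S : ℕ → Matrix (Fin D) (Fin D) ℝ)
    (hS : ∀ i : ℕ, S i = ((((List.range' (i + 1) (L - i))).reverse).map W).prod)
    -- `G` is the horizontal concatenation of the blocks `G^L_k = (S k)ᵀ ⊗ Z (k-1)`,
    -- for `k = 1, …, L` (block `c.1 : Fin L` corresponds to layer `k = c.1 + 1`)
    (G : Matrix (Fin D × Fin N) (Fin L × (Fin D × Fin D)) ℝ)
    (hG : G = Matrix.of fun r (c : Fin L × (Fin D × Fin D)) =>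
        (((S ((c.1 : ℕ) + 1))ᵀ ⊗ₖ Z (c.1 : ℕ)) r c.2)) :
    (∀ k : Fin L, (Z (k : ℕ)).rank ≤ G.rank) ∧
      G.rank ≤ D * ∑ k ∈ Finset.range L, (Z k).rank := by
  constructor
  · -- lower bound
    intro k
    rcases Nat.eq_zero_or_pos D with hD | hD
    · have h0 : (Z (k : ℕ)).rank ≤ Fintype.card (Fin D) :=
        Matrix.rank_le_card_width _
      simp [hD] at h0
      simp [h0]
    · -- `S (k+1)` is a unit
      have hSu : IsUnit (S ((k : ℕ) + 1)) := by
        rw [hS]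
        refine List.prod_isUnit ?_
        intro x hx
        rw [List.mem_map] at hx
        obtain ⟨j, _, rfl⟩ := hx
        exact hW j
      -- so it has a nonzero entry
      have hS0 : S ((k : ℕ) + 1) ≠ 0 := by
        intro h
        rw [h] at hSu
        rw [isUnit_zero_iff] at hSu
        have := congrFun (congrFun hSu ⟨0, hD⟩) ⟨0, hD⟩
        simp [Matrix.one_apply] at this
      have hex : ∃ a b, S ((k : ℕ) + 1) a b ≠ 0 := by
        by_contra h
        push_neg at h
        exact hS0 (by ext a b; simp [h a b])
      obtain ⟨a, b, hab⟩ := hex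
      -- the submatrix of `G` with rows `(b, n)` and columns `(k, (a, d))` is a
      -- nonzero scalar multiple of `Z k`
      have hsub : G.submatrix (fun n : Fin N => (b, n))
          (fun d : Fin D => (k, (a, d)))
          = Z (k : ℕ) * ((S ((k : ℕ) + 1) a b) • (1 : Matrix (Fin D) (Fin D) ℝ)) := by
        ext n d
        rw [hG]
        simp [Matrix.mul_apply, Matrix.one_apply, mul_ite, mul_comm]
      have hdet : IsUnit (((S ((k : ℕ) + 1) a b) • (1 : Matrix (Fin D) (Fin D) ℝ)).det) := by
        rw [Matrix.det_smul, Matrix.det_one, mul_one]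
        exact (isUnit_iff_ne_zero.mpr hab).pow _
      have key : (Z (k : ℕ)).rank
          = (G.submatrix (fun n : Fin N => (b, n)) (fun d : Fin D => (k, (a, d)))).rank := by
        rw [hsub]
        exact (Matrix.rank_mul_eq_left_of_isUnit_det _ _ hdet).symm
      rw [key]
      exact aux_rank_submatrix_le _ _ _
  · -- upper bound
    classical
    have hGsum : G = ∑ p : Fin L × Fin D,
        (Matrix.of fun (q : Fin D × Fin N) n' =>
          (S ((p.1 : ℕ) + 1))ᵀ q.1 p.2 * (if q.2 = n' then (1 : ℝ) else 0))
        * Z ((p.1 : ℕ))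
        * (Matrix.of fun e (c : Fin L × (Fin D × Fin D)) =>
            if c = (p.1, (p.2, e)) then (1 : ℝ) else 0) := by
      ext ⟨d, n⟩ ⟨k', a', b'⟩
      rw [hG]
      simp only [Matrix.sum_apply, Matrix.mul_apply, Matrix.of_apply,
        kroneckerMap_apply, ite_mul, mul_ite, one_mul, mul_one, mul_zero, zero_mul,
        Finset.sum_ite_eq, Finset.sum_ite_eq', Finset.mem_univ, if_true, Prod.mk.injEq]
      rw [Finset.sum_eq_single (k', a')]
      · simp
      · rintro ⟨x, y⟩ - hxy
        rw [Finset.sum_eq_zero]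
        rintro e -
        simp only [ite_eq_right_iff, and_imp]
        rintro rfl rfl rfl
        exact absurd rfl hxy
      · simp
    have hb : G.rank ≤ ∑ p : Fin L × Fin D, (Z ((p.1 : ℕ))).rank := by
      rw [hGsum]
      refine (aux_rank_sum_le _ _).trans ?_
      refine Finset.sum_le_sum fun p _ => ?_
      exact (Matrix.rank_mul_le_left _ _).trans (Matrix.rank_mul_le_right _ _)
    refine hb.trans ?_
    calc ∑ p : Fin L × Fin D, (Z ((p.1 : ℕ))).rank
        = ∑ k : Fin L, ∑ _a : Fin D, (Z ((k : ℕ))).rank := by rw [Fintype.sum_prod_type]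
      _ = ∑ k : Fin L, D * (Z ((k : ℕ))).rank := by
          simp [Finset.sum_const, Finset.card_univ, mul_comm]
      _ = D * ∑ k : Fin L, (Z ((k : ℕ))).rank := by rw [Finset.mul_sum]
      _ = D * ∑ k ∈ Finset.range L, (Z k).rank := by
          rw [Fin.sum_univ_eq_sum_range (fun k => (Z k).rank) L]
      _ ≤ D * ∑ k ∈ Finset.range L, (Z k).rank := le_rfl
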